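/- For the graphs G_n(f) defined from the square with corner points p₁ and p₅, the corner-to-corner resistance is monotone in n: R_{(G_n(f),E_n(f))}(p₁,p₅) ≤ R_{(G_{n+1}(f),E_{n+1}(f))}(p₁,p₅) for all n ≥ 0 and all f:ℕ→{0,1}. -/

import Mathlib

open scoped ENNReal

/-- The nine reference points `p₀, …, p₈` of the square `[-1/2,1/2]²` in `ℂ`. -/
noncomputable def pt : ℕ → ℂ
  | 1 => -(1 / 2) - Complex.I / 2
  | 2 => -(Complex.I / 2)
  | 3 => 1 / 2 - Complex.I / 2
  | 4 => 1 / 2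
  | 5 => 1 / 2 + Complex.I / 2
  | 6 => Complex.I / 2
  | 7 => -(1 / 2) + Complex.I / 2
  | 8 => -(1 / 2)
  | _ => 0

/-- The contraction `φ_j(z) = (z - p_j)/3 + p_j`. -/
noncomputable def phi (j : ℕ) (z : ℂ) : ℂ := (z - pt j) / 3 + pt j

/-- The vertex sets `G_n(f)`: a Vicsek-type level when `f n = 0` and a
Sierpiński-carpet-type level when `f n = 1`. -/
noncomputable def Gn (f : ℕ → ℕ) : ℕ → Set ℂ
  | 0 => {pt 0, pt 1, pt 3, pt 5, pt 7}
  | n + 1 =>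
      if f (n + 1) = 0 then ⋃ j ∈ ({0, 1, 3, 5, 7} : Set ℕ), phi j '' Gn f n
      else ⋃ j ∈ ({1, 2, 3, 4, 5, 6, 7, 8} : Set ℕ), phi j '' Gn f n

/-- The edge set `E_n(f)`: pairs of points of `G_n(f)` at Euclidean distance
`3⁻ⁿ · 2^{-1/2}`. -/
noncomputable def En (f : ℕ → ℕ) (n : ℕ) : Set (ℂ × ℂ) :=
  {q | q.1 ∈ Gn f n ∧ q.2 ∈ Gn f n ∧
    ‖q.1 - q.2‖ = (3 : ℝ) ^ (-(n : ℤ)) / Real.sqrt 2}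

/-- Energy `(1/2) Σ_{(x,y) ∈ Ed} (g x - g y)²` with simple (unit) weights. -/
noncomputable def edgeEnergy (Ed : Set (ℂ × ℂ)) (g : ℂ → ℝ) : ℝ≥0∞ :=
  (1 / 2) * ∑' e : Ed, ENNReal.ofReal ((g (e : ℂ × ℂ).1 - g (e : ℂ × ℂ).2) ^ 2)

/-- Effective resistance `R(A,B) = (inf { energy g : g ≡ 1 on A, g ≡ 0 on B })⁻¹`. -/
noncomputable def edgeRes (Ed : Set (ℂ × ℂ)) (A B : Set ℂ) : ℝ≥0∞ :=
  (⨅ (g : ℂ → ℝ) (_ : (∀ a ∈ A, g a = 1) ∧ (∀ b ∈ B, g b = 0)), edgeEnergy Ed g)⁻¹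


def tc (z : ℂ) : ℝ := z.re + z.im

lemma tc_phi (j : ℕ) (w : ℂ) : tc (phi j w) = tc w / 3 + 2 * tc (pt j) / 3 := by
  simp [tc, phi, Complex.add_re, Complex.add_im, Complex.div_re, Complex.div_im]
  ring

lemma tc_pt0 : tc (pt 0) = 0 := by simp [tc, pt]
lemma tc_pt1 : tc (pt 1) = -1 := by simp [tc, pt]; norm_num
lemma tc_pt2 : tc (pt 2) = -(1/2) := by simp [tc, pt]
lemma tc_pt3 : tc (pt 3) = 0 := by simp [tc, pt]
lemma tc_pt4 : tc (pt 4) = 1/2 := by simp [tc, pt]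
lemma tc_pt5 : tc (pt 5) = 1 := by simp [tc, pt]; norm_num
lemma tc_pt6 : tc (pt 6) = 1/2 := by simp [tc, pt]
lemma tc_pt7 : tc (pt 7) = 0 := by simp [tc, pt]
lemma tc_pt8 : tc (pt 8) = -(1/2) := by simp [tc, pt]

lemma phi_fix (j : ℕ) : phi j (pt j) = pt j := by simp [phi]

def GnP (n : ℕ) (z : ℂ) : Prop :=
  -1 ≤ tc z ∧ tc z ≤ 1 ∧ (tc z = -1 → z = pt 1) ∧ (tc z = 1 → z = pt 5) ∧
    ∃ k : ℤ, tc z * 3 ^ n = (k : ℝ)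

lemma GnP_phi (n : ℕ) (j : ℕ) (hj : j ≤ 8) (w : ℂ) (H : GnP n w) : GnP (n+1) (phi j w) := by
  obtain ⟨h1, h2, hc1, hc5, k, hk⟩ := H
  interval_cases j <;>
    [ (have tcj := tc_pt0); (have tcj := tc_pt1); (have tcj := tc_pt2); (have tcj := tc_pt3);
      (have tcj := tc_pt4); (have tcj := tc_pt5); (have tcj := tc_pt6); (have tcj := tc_pt7);
      (have tcj := tc_pt8)] <;>
  · constructor
    · rw [tc_phi, tcj]; linarith
    constructor
    · rw [tc_phi, tcj]; linarith
    constructor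
    · rw [tc_phi, tcj]; intro h
      first
        | (exfalso; linarith)
        | (have hw : tc w = -1 := by linarith
           rw [hc1 hw, phi_fix])
    constructor
    · rw [tc_phi, tcj]; intro h
      first
        | (exfalso; linarith)
        | (have hw : tc w = 1 := by linarith
           rw [hc5 hw, phi_fix])
    · rw [tc_phi, tcj]
      first
        | exact ⟨k, by push_cast; linear_combination hk⟩
        | exact ⟨k - 2*3^n, by push_cast; linear_combination hk⟩
        | exact ⟨k + 2*3^n, by push_cast; linear_combination hk⟩
        | exact ⟨k - 3^n, by push_cast; linear_combination hk⟩
        | exact ⟨k + 3^n, by push_cast; linear_combination hk⟩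

lemma Gn_struct (f : ℕ → ℕ) : ∀ n, ∀ z ∈ Gn f n, GnP n z := by
  intro n
  induction n with
  | zero =>
    intro z hz
    have b0 : GnP 0 (pt 0) := ⟨by rw [tc_pt0]; norm_num, by rw [tc_pt0]; norm_num,
      by rw [tc_pt0]; norm_num, by rw [tc_pt0]; norm_num, ⟨0, by rw [tc_pt0]; norm_num⟩⟩
    have b1 : GnP 0 (pt 1) := ⟨by rw [tc_pt1], by rw [tc_pt1]; norm_num,
      fun _ => rfl, by rw [tc_pt1]; norm_num, ⟨-1, by rw [tc_pt1]; norm_num⟩⟩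
    have b3 : GnP 0 (pt 3) := ⟨by rw [tc_pt3]; norm_num, by rw [tc_pt3]; norm_num,
      by rw [tc_pt3]; norm_num, by rw [tc_pt3]; norm_num, ⟨0, by rw [tc_pt3]; norm_num⟩⟩
    have b5 : GnP 0 (pt 5) := ⟨by rw [tc_pt5]; norm_num, by rw [tc_pt5],
      by rw [tc_pt5]; norm_num, fun _ => rfl, ⟨1, by rw [tc_pt5]; norm_num⟩⟩
    have b7 : GnP 0 (pt 7) := ⟨by rw [tc_pt7]; norm_num, by rw [tc_pt7]; norm_num,
      by rw [tc_pt7]; norm_num, by rw [tc_pt7]; norm_num, ⟨0, by rw [tc_pt7]; norm_num⟩⟩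
    rcases hz with rfl | rfl | rfl | rfl | rfl <;> assumption
  | succ n ih =>
    intro z hz
    rw [Gn] at hz
    split_ifs at hz with h0 <;>
    · simp only [Set.mem_iUnion, Set.mem_insert_iff, Set.mem_singleton_iff, Set.mem_image] at hz
      obtain ⟨j, hj, w, hw, rfl⟩ := hz
      have hj8 : j ≤ 8 := by omega
      exact GnP_phi n j hj8 w (ih w hw)

lemma phi_inv1 (w : ℂ) : 3 * phi 1 w - 2 * pt 1 = w := by rw [phi]; ring
lemma phi_inv5 (w : ℂ) : 3 * phi 5 w - 2 * pt 5 = w := by rw [phi]; ring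

lemma Gn_corner (f : ℕ → ℕ) : ∀ n, pt 1 ∈ Gn f n ∧ pt 3 ∈ Gn f n ∧ pt 5 ∈ Gn f n ∧ pt 7 ∈ Gn f n := by
  intro n
  induction n with
  | zero => refine ⟨?_, ?_, ?_, ?_⟩ <;> simp [Gn]
  | succ n ih =>
    obtain ⟨i1, i3, i5, i7⟩ := ih
    rw [Gn]
    split_ifs with h0 <;>
    · refine ⟨?_, ?_, ?_, ?_⟩ <;>
        simp only [Set.mem_iUnion, Set.mem_insert_iff, Set.mem_singleton_iff, Set.mem_image]
      · exact ⟨1, by norm_num, pt 1, i1, phi_fix 1⟩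
      · exact ⟨3, by norm_num, pt 3, i3, phi_fix 3⟩
      · exact ⟨5, by norm_num, pt 5, i5, phi_fix 5⟩
      · exact ⟨7, by norm_num, pt 7, i7, phi_fix 7⟩

lemma pt_eq_a : 3 * phi 2 (pt 1) - 2 * pt 1 = pt 3 := by simp [phi, pt]; ring
lemma pt_eq_b : 3 * phi 8 (pt 1) - 2 * pt 1 = pt 7 := by simp [phi, pt]; ring
lemma pt_eq_c : 3 * phi 4 (pt 5) - 2 * pt 5 = pt 3 := by simp [phi, pt]; ring
lemma pt_eq_d : 3 * phi 6 (pt 5) - 2 * pt 5 = pt 7 := by simp [phi, pt]; ring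

lemma Gn_pullA (f : ℕ → ℕ) (n : ℕ) (z : ℂ) (hz : z ∈ Gn f (n+1)) (ht : tc z ≤ -(2/3)) :
    3 * z - 2 * pt 1 ∈ Gn f n := by
  rw [Gn] at hz
  split_ifs at hz with h0 <;>
  · simp only [Set.mem_iUnion, Set.mem_insert_iff, Set.mem_singleton_iff, Set.mem_image] at hz
    obtain ⟨j, hj, w, hw, rfl⟩ := hz
    obtain ⟨hb1, hb2, hbc1, hbc5, -⟩ := Gn_struct f n w hw
    rw [tc_phi] at ht
    rcases hj with rfl | rfl | rfl | rfl | rfl | rfl | rfl | rfl <;>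
      first
      | (exfalso; rw [tc_pt0] at ht; linarith)
      | (exfalso; rw [tc_pt3] at ht; linarith)
      | (exfalso; rw [tc_pt4] at ht; linarith)
      | (exfalso; rw [tc_pt5] at ht; linarith)
      | (exfalso; rw [tc_pt6] at ht; linarith)
      | (exfalso; rw [tc_pt7] at ht; linarith)
      | (rw [phi_inv1]; exact hw)
      | (rw [tc_pt2] at ht
         have hw1 : w = pt 1 := hbc1 (by linarith)
         rw [hw1, pt_eq_a]; exact (Gn_corner f n).2.1)
      | (rw [tc_pt8] at ht
         have hw1 : w = pt 1 := hbc1 (by linarith)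
         rw [hw1, pt_eq_b]; exact (Gn_corner f n).2.2.2)

lemma Gn_pullB (f : ℕ → ℕ) (n : ℕ) (z : ℂ) (hz : z ∈ Gn f (n+1)) (ht : 2/3 ≤ tc z) :
    3 * z - 2 * pt 5 ∈ Gn f n := by
  rw [Gn] at hz
  split_ifs at hz with h0 <;>
  · simp only [Set.mem_iUnion, Set.mem_insert_iff, Set.mem_singleton_iff, Set.mem_image] at hz
    obtain ⟨j, hj, w, hw, rfl⟩ := hz
    obtain ⟨hb1, hb2, hbc1, hbc5, -⟩ := Gn_struct f n w hw
    rw [tc_phi] at ht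
    rcases hj with rfl | rfl | rfl | rfl | rfl | rfl | rfl | rfl <;>
      first
      | (exfalso; rw [tc_pt0] at ht; linarith)
      | (exfalso; rw [tc_pt1] at ht; linarith)
      | (exfalso; rw [tc_pt2] at ht; linarith)
      | (exfalso; rw [tc_pt3] at ht; linarith)
      | (exfalso; rw [tc_pt7] at ht; linarith)
      | (exfalso; rw [tc_pt8] at ht; linarith)
      | (rw [phi_inv5]; exact hw)
      | (rw [tc_pt4] at ht
         have hw1 : w = pt 5 := hbc5 (by linarith)
         rw [hw1, pt_eq_c]; exact (Gn_corner f n).2.1)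
      | (rw [tc_pt6] at ht
         have hw1 : w = pt 5 := hbc5 (by linarith)
         rw [hw1, pt_eq_d]; exact (Gn_corner f n).2.2.2)

noncomputable def sg (z : ℂ) : ℂ := -Complex.I * (starRingEnd ℂ z)

lemma sg_invol : Function.Involutive sg := by
  intro z
  apply Complex.ext <;> simp [sg, Complex.mul_re, Complex.mul_im]

lemma sg_abs (a b : ℂ) : ‖sg a - sg b‖ = ‖a - b‖ := by
  have h : sg a - sg b = -Complex.I * (starRingEnd ℂ (a - b)) := by simp [sg]; ring
  rw [h, norm_mul, Complex.norm_conj]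
  norm_num

lemma tc_sg (z : ℂ) : tc (sg z) = -tc z := by
  simp only [tc, sg, Complex.mul_re, Complex.mul_im, Complex.neg_re, Complex.neg_im,
    Complex.I_re, Complex.I_im, Complex.conj_re, Complex.conj_im]
  ring

lemma sg_fixed (z : ℂ) (h : tc z = 0) : sg z = z := by
  have him : z.im = -z.re := by unfold tc at h; linarith
  apply Complex.ext <;> simp [sg, Complex.mul_re, Complex.mul_im, him]

lemma sg_pt0 : sg (pt 0) = pt 0 := by
  apply Complex.ext <;> simp [sg, pt, Complex.mul_re, Complex.mul_im]
lemma sg_pt1 : sg (pt 1) = pt 5 := by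
  apply Complex.ext <;> simp [sg, pt, Complex.mul_re, Complex.mul_im, map_ofNat, Complex.div_re, Complex.div_im, Complex.normSq] <;> norm_num
lemma sg_pt2 : sg (pt 2) = pt 4 := by
  apply Complex.ext <;> simp [sg, pt, Complex.mul_re, Complex.mul_im, map_ofNat, Complex.div_re, Complex.div_im, Complex.normSq] <;> norm_num
lemma sg_pt3 : sg (pt 3) = pt 3 := by
  apply Complex.ext <;> simp [sg, pt, Complex.mul_re, Complex.mul_im, map_ofNat, Complex.div_re, Complex.div_im, Complex.normSq] <;> norm_num
lemma sg_pt4 : sg (pt 4) = pt 2 := by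
  apply Complex.ext <;> simp [sg, pt, Complex.mul_re, Complex.mul_im, map_ofNat, Complex.div_re, Complex.div_im, Complex.normSq] <;> norm_num
lemma sg_pt5 : sg (pt 5) = pt 1 := by
  apply Complex.ext <;> simp [sg, pt, Complex.mul_re, Complex.mul_im, map_ofNat, Complex.div_re, Complex.div_im, Complex.normSq] <;> norm_num
lemma sg_pt6 : sg (pt 6) = pt 8 := by
  apply Complex.ext <;> simp [sg, pt, Complex.mul_re, Complex.mul_im, map_ofNat, Complex.div_re, Complex.div_im, Complex.normSq] <;> norm_num
lemma sg_pt7 : sg (pt 7) = pt 7 := by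
  apply Complex.ext <;> simp [sg, pt, Complex.mul_re, Complex.mul_im, map_ofNat, Complex.div_re, Complex.div_im, Complex.normSq] <;> norm_num
lemma sg_pt8 : sg (pt 8) = pt 6 := by
  apply Complex.ext <;> simp [sg, pt, Complex.mul_re, Complex.mul_im, map_ofNat, Complex.div_re, Complex.div_im, Complex.normSq] <;> norm_num

lemma sg_phi (j j' : ℕ) (h : sg (pt j) = pt j') (w : ℂ) : sg (phi j w) = phi j' (sg w) := by
  have hlin : sg (phi j w) = (sg w - sg (pt j)) / 3 + sg (pt j) := by
    simp [sg, phi, map_add, map_sub, map_div₀, map_ofNat]; ring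
  rw [hlin, h, phi]

lemma sg_Gn (f : ℕ → ℕ) : ∀ n, ∀ z ∈ Gn f n, sg z ∈ Gn f n := by
  intro n
  induction n with
  | zero =>
    intro z hz
    rcases hz with rfl | rfl | rfl | rfl | rfl <;>
      simp only [Gn, sg_pt0, sg_pt1, sg_pt3, sg_pt5, sg_pt7] <;> simp
  | succ n ih =>
    intro z hz
    rw [Gn] at hz ⊢
    split_ifs at hz ⊢ with h0 <;>
    · simp only [Set.mem_iUnion, Set.mem_insert_iff, Set.mem_singleton_iff, Set.mem_image] at hz ⊢
      obtain ⟨j, hj, w, hw, rfl⟩ := hz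
      rcases hj with rfl | rfl | rfl | rfl | rfl | rfl | rfl | rfl <;>
      first
        | exact ⟨0, by norm_num, sg w, ih w hw, (sg_phi 0 0 sg_pt0 w).symm⟩
        | exact ⟨5, by norm_num, sg w, ih w hw, (sg_phi 1 5 sg_pt1 w).symm⟩
        | exact ⟨4, by norm_num, sg w, ih w hw, (sg_phi 2 4 sg_pt2 w).symm⟩
        | exact ⟨3, by norm_num, sg w, ih w hw, (sg_phi 3 3 sg_pt3 w).symm⟩
        | exact ⟨2, by norm_num, sg w, ih w hw, (sg_phi 4 2 sg_pt4 w).symm⟩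
        | exact ⟨1, by norm_num, sg w, ih w hw, (sg_phi 5 1 sg_pt5 w).symm⟩
        | exact ⟨8, by norm_num, sg w, ih w hw, (sg_phi 6 8 sg_pt6 w).symm⟩
        | exact ⟨7, by norm_num, sg w, ih w hw, (sg_phi 7 7 sg_pt7 w).symm⟩
        | exact ⟨6, by norm_num, sg w, ih w hw, (sg_phi 8 6 sg_pt8 w).symm⟩

lemma tc_lin (a c : ℂ) : tc (3*a - 2*c) = 3 * tc a - 2 * tc c := by
  simp [tc]; ring

lemma tc_diff_bound (a b : ℂ) : |tc a - tc b| ≤ Real.sqrt 2 * ‖a - b‖ := by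
  have hd : tc a - tc b = (a-b).re + (a-b).im := by simp [tc]; ring
  have h2 : (tc a - tc b)^2 ≤ 2 * ‖a-b‖ ^ 2 := by
    rw [hd, Complex.sq_norm, Complex.normSq_apply]
    nlinarith [sq_nonneg ((a-b).re - (a-b).im)]
  have habs : 0 ≤ ‖a-b‖ := norm_nonneg _
  calc |tc a - tc b| = Real.sqrt ((tc a - tc b)^2) := (Real.sqrt_sq_eq_abs _).symm
    _ ≤ Real.sqrt (2 * ‖a-b‖^2) := Real.sqrt_le_sqrt h2
    _ = Real.sqrt 2 * ‖a-b‖ := by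
        rw [Real.sqrt_mul (by norm_num), Real.sqrt_sq habs]

lemma zpow_conv (m : ℕ) : (3 : ℝ) ^ (-(m : ℤ)) = ((3:ℝ)^m)⁻¹ := by
  rw [zpow_neg, zpow_natCast]

lemma En_tc_gap (f : ℕ → ℕ) (m : ℕ) (e : ℂ × ℂ) (he : e ∈ En f m) :
    |tc e.1 - tc e.2| ≤ ((3:ℝ)^m)⁻¹ := by
  obtain ⟨-, -, hd⟩ := he
  have h2 : Real.sqrt 2 ≠ 0 := by
    rw [Real.sqrt_ne_zero']; norm_num
  calc |tc e.1 - tc e.2| ≤ Real.sqrt 2 * ‖e.1 - e.2‖ := tc_diff_bound _ _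
    _ = Real.sqrt 2 * (((3:ℝ)^m)⁻¹ / Real.sqrt 2) := by rw [hd, zpow_conv]
    _ = ((3:ℝ)^m)⁻¹ := by field_simp

lemma tc_boundaryA (f : ℕ → ℕ) (n : ℕ) (a : ℂ) (ha : a ∈ Gn f (n+1)) (h1 : tc a ≤ -(2/3))
    (h2 : -(2/3) - ((3:ℝ)^(n+1))⁻¹ < tc a) : tc a = -(2/3) := by
  obtain ⟨-, -, -, -, k, hk⟩ := Gn_struct f (n+1) a ha
  have hp : (0:ℝ) < (3:ℝ)^(n+1) := by positivity
  have hk1 : (k:ℝ) ≤ ((-2*3^n : ℤ) : ℝ) := by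
    push_cast
    rw [← hk]
    calc tc a * 3^(n+1) ≤ -(2/3) * 3^(n+1) := by nlinarith
      _ = -2*3^n := by ring
  have hk2 : ((-2*3^n - 1 : ℤ) : ℝ) < (k:ℝ) := by
    push_cast
    rw [← hk]
    have : (-(2/3) - ((3:ℝ)^(n+1))⁻¹) * 3^(n+1) < tc a * 3^(n+1) := by nlinarith
    calc (-2*3^n - 1 : ℝ) = (-(2/3) - ((3:ℝ)^(n+1))⁻¹) * 3^(n+1) := by field_simp; ring
      _ < tc a * 3^(n+1) := this
  have hk1' : k ≤ -2*3^n := by exact_mod_cast hk1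
  have hk2' : -2*3^n - 1 < k := by exact_mod_cast hk2
  have hkeq : k = -2*3^n := by omega
  have : tc a * 3^(n+1) = ((-2*3^n : ℤ) : ℝ) := by rw [hk, hkeq]
  push_cast at this
  have h3 : tc a * 3^(n+1) = -(2/3) * 3^(n+1) := by rw [this]; ring
  exact mul_right_cancel₀ (ne_of_gt hp) h3

lemma tc_boundaryB (f : ℕ → ℕ) (n : ℕ) (a : ℂ) (ha : a ∈ Gn f (n+1)) (h1 : 2/3 ≤ tc a)
    (h2 : tc a < 2/3 + ((3:ℝ)^(n+1))⁻¹) : tc a = 2/3 := by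
  obtain ⟨-, -, -, -, k, hk⟩ := Gn_struct f (n+1) a ha
  have hp : (0:ℝ) < (3:ℝ)^(n+1) := by positivity
  have hk1 : ((2*3^n : ℤ) : ℝ) ≤ (k:ℝ) := by
    push_cast
    rw [← hk]
    calc (2*3^n : ℝ) = (2/3) * 3^(n+1) := by ring
      _ ≤ tc a * 3^(n+1) := by nlinarith
  have hk2 : (k:ℝ) < ((2*3^n + 1 : ℤ) : ℝ) := by
    push_cast
    rw [← hk]
    calc tc a * 3^(n+1) < (2/3 + ((3:ℝ)^(n+1))⁻¹) * 3^(n+1) := by nlinarith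
      _ = 2*3^n + 1 := by field_simp; ring
  have hk1' : 2*3^n ≤ k := by exact_mod_cast hk1
  have hk2' : k < 2*3^n + 1 := by exact_mod_cast hk2
  have hkeq : k = 2*3^n := by omega
  have : tc a * 3^(n+1) = ((2*3^n : ℤ) : ℝ) := by rw [hk, hkeq]
  push_cast at this
  have h3 : tc a * 3^(n+1) = (2/3) * 3^(n+1) := by rw [this]; ring
  exact mul_right_cancel₀ (ne_of_gt hp) h3

noncomputable def gOf (H : ℂ → ℝ) (z : ℂ) : ℝ :=
  if tc z ≤ -(2/3) then H (3*z - 2*pt 1) else if 2/3 ≤ tc z then H (3*z - 2*pt 5) else 1/2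

lemma gOf_mid_val (H : ℂ → ℝ) (hmid : ∀ z, tc z = 0 → H z = 1/2) (f : ℕ → ℕ) (n : ℕ) (a : ℂ)
    (ha : a ∈ Gn f (n+1))
    (hA : tc a ≤ -(2/3) → -(2/3) - ((3:ℝ)^(n+1))⁻¹ < tc a)
    (hB : 2/3 ≤ tc a → tc a < 2/3 + ((3:ℝ)^(n+1))⁻¹) : gOf H a = 1/2 := by
  by_cases h1 : tc a ≤ -(2/3)
  · have heq := tc_boundaryA f n a ha h1 (hA h1)
    rw [gOf, if_pos h1]
    exact hmid _ (by rw [tc_lin, heq, tc_pt1]; ring)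
  · by_cases h2 : 2/3 ≤ tc a
    · have heq := tc_boundaryB f n a ha h2 (hB h2)
      rw [gOf, if_neg h1, if_pos h2]
      exact hmid _ (by rw [tc_lin, heq, tc_pt5]; ring)
    · rw [gOf, if_neg h1, if_neg h2]

lemma energy_step (f : ℕ → ℕ) (n : ℕ) (H : ℂ → ℝ) (hmid : ∀ z, tc z = 0 → H z = 1/2) :
    edgeEnergy (En f (n+1)) (gOf H) ≤ edgeEnergy (En f n) H := by
  classical
  set g := gOf H with hg
  set c : ℂ × ℂ → ℝ≥0∞ := fun e => ENNReal.ofReal ((g e.1 - g e.2)^2) with hc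
  set d : ℂ × ℂ → ℝ≥0∞ := fun e => ENNReal.ofReal ((H e.1 - H e.2)^2) with hd
  set RA : Set (ℂ × ℂ) := {e | tc e.1 ≤ -(2/3) ∧ tc e.2 ≤ -(2/3)} with hRA
  set RB : Set (ℂ × ℂ) := {e | 2/3 ≤ tc e.1 ∧ 2/3 ≤ tc e.2} with hRB
  set TA : Set (ℂ × ℂ) := {e | tc e.1 ≤ 0 ∧ tc e.2 ≤ 0} with hTA
  set TB : Set (ℂ × ℂ) := {e | 0 ≤ tc e.1 ∧ 0 ≤ tc e.2} with hTB
  suffices hS : ∑' e : En f (n+1), c e ≤ ∑' e : En f n, d e by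
    exact mul_le_mul_right hS _
  have hgap : ∀ e ∈ En f (n+1), |tc e.1 - tc e.2| ≤ ((3:ℝ)^(n+1))⁻¹ := fun e he => En_tc_gap f (n+1) e he
  -- step 1 : split into regions
  have step1 : ∑' e : En f (n+1), c e ≤
      (∑' e : ↑(En f (n+1) ∩ RA), c e) + ∑' e : ↑(En f (n+1) ∩ RB), c e := by
    rw [tsum_subtype, tsum_subtype, tsum_subtype, ← ENNReal.tsum_add]
    apply ENNReal.tsum_le_tsum
    intro e
    by_cases he : e ∈ En f (n+1)
    · by_cases hA : e ∈ RA
      · have hm : e ∈ En f (n+1) ∩ RA := ⟨he, hA⟩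
        rw [Set.indicator_of_mem he, Set.indicator_of_mem hm]
        exact le_self_add
      · by_cases hB : e ∈ RB
        · have hm : e ∈ En f (n+1) ∩ RB := ⟨he, hB⟩
          rw [Set.indicator_of_mem he, Set.indicator_of_mem hm]
          exact le_add_self
        · -- middle : contribution zero
          rw [Set.indicator_of_mem he]
          have hgap' := hgap e he
          have habs := abs_sub_le_iff.mp hgap'
          have hRA' : ¬(tc e.1 ≤ -(2/3) ∧ tc e.2 ≤ -(2/3)) := hA
          have hRB' : ¬(2/3 ≤ tc e.1 ∧ 2/3 ≤ tc e.2) := hB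
          have h1 : g e.1 = 1/2 := by
            apply gOf_mid_val H hmid f n _ he.1
            · intro hle
              have h2' : ¬ tc e.2 ≤ -(2/3) := fun hh => hRA' ⟨hle, hh⟩
              push_neg at h2'
              linarith [habs.1, habs.2]
            · intro hge
              have h2' : ¬ 2/3 ≤ tc e.2 := fun hh => hRB' ⟨hge, hh⟩
              push_neg at h2'
              linarith [habs.1, habs.2]
          have h2 : g e.2 = 1/2 := by
            apply gOf_mid_val H hmid f n _ he.2.1
            · intro hle
              have h2' : ¬ tc e.1 ≤ -(2/3) := fun hh => hRA' ⟨hh, hle⟩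
              push_neg at h2'
              linarith [habs.1, habs.2]
            · intro hge
              have h2' : ¬ 2/3 ≤ tc e.1 := fun hh => hRB' ⟨hh, hge⟩
              push_neg at h2'
              linarith [habs.1, habs.2]
          have : c e = 0 := by rw [hc]; simp [h1, h2]
          rw [this]
          exact zero_le
    · rw [Set.indicator_of_notMem he]
      exact zero_le
  -- scaled distance helper
  have hdist : ∀ (p : ℂ) (a b : ℂ), ‖a - b‖ = (3:ℝ)^(-(↑(n+1):ℤ))/Real.sqrt 2 →
      ‖(3*a - 2*p) - (3*b - 2*p)‖ = (3:ℝ)^(-(n:ℤ))/Real.sqrt 2 := by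
    intro p a b hab
    have h3 : (3*a - 2*p) - (3*b - 2*p) = 3*(a-b) := by ring
    rw [h3, norm_mul, hab, zpow_conv, zpow_conv]
    have : ‖(3:ℂ)‖ = 3 := by norm_num
    rw [this, pow_succ]
    have h9 : ((3:ℝ)^n * 3)⁻¹ = ((3:ℝ)^n)⁻¹ * 3⁻¹ := by rw [mul_inv]
    rw [h9]
    field_simp
  -- step A
  have stepA : ∑' e : ↑(En f (n+1) ∩ RA), c e ≤ ∑' e : ↑(En f n ∩ TA), d e := by
    have hmem : ∀ e : ↑(En f (n+1) ∩ RA),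
        ((3*(e:ℂ × ℂ).1 - 2*pt 1, 3*(e:ℂ × ℂ).2 - 2*pt 1) : ℂ × ℂ) ∈ En f n ∩ TA := by
      rintro ⟨e, ⟨hm1, hm2, hdd⟩, hA1, hA2⟩
      refine ⟨⟨Gn_pullA f n _ hm1 hA1, Gn_pullA f n _ hm2 hA2, hdist (pt 1) _ _ hdd⟩, ?_, ?_⟩
      · show tc (3*e.1 - 2*pt 1) ≤ 0
        rw [tc_lin, tc_pt1]; linarith [hA1]
      · show tc (3*e.2 - 2*pt 1) ≤ 0
        rw [tc_lin, tc_pt1]; linarith [hA2]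
    set ι : ↑(En f (n+1) ∩ RA) → ↑(En f n ∩ TA) :=
      fun e => ⟨(3*(e:ℂ × ℂ).1 - 2*pt 1, 3*(e:ℂ × ℂ).2 - 2*pt 1), hmem e⟩ with hι
    have hinj : Function.Injective ι := by
      intro x y hxy
      apply Subtype.ext
      have hval := congrArg Subtype.val hxy
      simp only [hι] at hval
      obtain ⟨h1, h2⟩ := Prod.ext_iff.mp hval
      have e1 : (x:ℂ × ℂ).1 = (y:ℂ × ℂ).1 := by
        have : (3:ℂ) * (x:ℂ × ℂ).1 = 3 * (y:ℂ × ℂ).1 := by linear_combination h1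
        exact mul_left_cancel₀ (by norm_num) this
      have e2 : (x:ℂ × ℂ).2 = (y:ℂ × ℂ).2 := by
        have : (3:ℂ) * (x:ℂ × ℂ).2 = 3 * (y:ℂ × ℂ).2 := by linear_combination h2
        exact mul_left_cancel₀ (by norm_num) this
      exact Prod.ext e1 e2
    have hval : ∀ e : ↑(En f (n+1) ∩ RA), c e = d ((ι e) : ℂ × ℂ) := by
      rintro ⟨e, he, hA1, hA2⟩
      simp only [hc, hd, hι, hg]
      rw [gOf, if_pos hA1]
      conv_lhs => rw [gOf, if_pos hA2]
    calc ∑' e : ↑(En f (n+1) ∩ RA), c e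
        = ∑' e : ↑(En f (n+1) ∩ RA), (fun e' : ↑(En f n ∩ TA) => d e') (ι e) := by
          exact tsum_congr hval
      _ ≤ ∑' e' : ↑(En f n ∩ TA), d e' := ENNReal.tsum_comp_le_tsum_of_injective hinj _
  -- step B
  have stepB : ∑' e : ↑(En f (n+1) ∩ RB), c e ≤ ∑' e : ↑(En f n ∩ TB), d e := by
    have hmem : ∀ e : ↑(En f (n+1) ∩ RB),
        ((3*(e:ℂ × ℂ).1 - 2*pt 5, 3*(e:ℂ × ℂ).2 - 2*pt 5) : ℂ × ℂ) ∈ En f n ∩ TB := by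
      rintro ⟨e, ⟨hm1, hm2, hdd⟩, hB1, hB2⟩
      refine ⟨⟨Gn_pullB f n _ hm1 hB1, Gn_pullB f n _ hm2 hB2, hdist (pt 5) _ _ hdd⟩, ?_, ?_⟩
      · show 0 ≤ tc (3*e.1 - 2*pt 5)
        rw [tc_lin, tc_pt5]; linarith [hB1]
      · show 0 ≤ tc (3*e.2 - 2*pt 5)
        rw [tc_lin, tc_pt5]; linarith [hB2]
    set ι : ↑(En f (n+1) ∩ RB) → ↑(En f n ∩ TB) :=
      fun e => ⟨(3*(e:ℂ × ℂ).1 - 2*pt 5, 3*(e:ℂ × ℂ).2 - 2*pt 5), hmem e⟩ with hι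
    have hinj : Function.Injective ι := by
      intro x y hxy
      apply Subtype.ext
      have hval := congrArg Subtype.val hxy
      simp only [hι] at hval
      obtain ⟨h1, h2⟩ := Prod.ext_iff.mp hval
      have e1 : (x:ℂ × ℂ).1 = (y:ℂ × ℂ).1 := by
        have : (3:ℂ) * (x:ℂ × ℂ).1 = 3 * (y:ℂ × ℂ).1 := by linear_combination h1
        exact mul_left_cancel₀ (by norm_num) this
      have e2 : (x:ℂ × ℂ).2 = (y:ℂ × ℂ).2 := by
        have : (3:ℂ) * (x:ℂ × ℂ).2 = 3 * (y:ℂ × ℂ).2 := by linear_combination h2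
        exact mul_left_cancel₀ (by norm_num) this
      exact Prod.ext e1 e2
    have hval : ∀ e : ↑(En f (n+1) ∩ RB), c e = d ((ι e) : ℂ × ℂ) := by
      rintro ⟨e, he, hB1, hB2⟩
      simp only [hc, hd, hι, hg]
      have hn1 : ¬ tc e.1 ≤ -(2/3) := by linarith
      have hn2 : ¬ tc e.2 ≤ -(2/3) := by linarith
      rw [gOf, if_neg hn1, if_pos hB1]
      conv_lhs => rw [gOf, if_neg hn2, if_pos hB2]
    calc ∑' e : ↑(En f (n+1) ∩ RB), c e
        = ∑' e : ↑(En f (n+1) ∩ RB), (fun e' : ↑(En f n ∩ TB) => d e') (ι e) := by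
          exact tsum_congr hval
      _ ≤ ∑' e' : ↑(En f n ∩ TB), d e' := ENNReal.tsum_comp_le_tsum_of_injective hinj _
  -- step F
  have stepF : (∑' e : ↑(En f n ∩ TA), d e) + ∑' e : ↑(En f n ∩ TB), d e ≤
      ∑' e : En f n, d e := by
    rw [tsum_subtype, tsum_subtype, tsum_subtype, ← ENNReal.tsum_add]
    apply ENNReal.tsum_le_tsum
    intro e
    by_cases h1 : e ∈ En f n ∩ TA
    · by_cases h2 : e ∈ En f n ∩ TB
      · have hz1 : tc e.1 = 0 := le_antisymm h1.2.1 h2.2.1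
        have hz2 : tc e.2 = 0 := le_antisymm h1.2.2 h2.2.2
        have : d e = 0 := by
          rw [hd]; simp [hmid _ hz1, hmid _ hz2]
        rw [Set.indicator_of_mem h1, Set.indicator_of_mem h2, this]
        simp
      · rw [Set.indicator_of_mem h1, Set.indicator_of_notMem h2,
          Set.indicator_of_mem h1.1]
        simp
    · by_cases h2 : e ∈ En f n ∩ TB
      · rw [Set.indicator_of_notMem h1, Set.indicator_of_mem h2,
          Set.indicator_of_mem h2.1]
        simp
      · rw [Set.indicator_of_notMem h1, Set.indicator_of_notMem h2]
        simp
  exact step1.trans ((add_le_add stepA stepB).trans stepF)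

lemma sym_energy (f : ℕ → ℕ) (n : ℕ) (h : ℂ → ℝ) :
    edgeEnergy (En f n) (fun z => (h z + 1 - h (sg z)) / 2) ≤ edgeEnergy (En f n) h := by
  classical
  set hs : ℂ → ℝ := fun z => (h z + 1 - h (sg z)) / 2 with hhs
  set F : ℂ × ℂ → ℝ≥0∞ := fun e => ENNReal.ofReal ((h e.1 - h e.2)^2) with hF
  -- the reflection on edges
  have hmem : ∀ e : ↑(En f n), ((sg (e:ℂ × ℂ).1, sg (e:ℂ × ℂ).2) : ℂ × ℂ) ∈ En f n := by
    rintro ⟨e, hm1, hm2, hdd⟩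
    exact ⟨sg_Gn f n _ hm1, sg_Gn f n _ hm2, by rw [sg_abs]; exact hdd⟩
  set SS : ↑(En f n) → ↑(En f n) := fun e => ⟨(sg (e:ℂ × ℂ).1, sg (e:ℂ × ℂ).2), hmem e⟩ with hSS
  have hinj : Function.Injective SS := by
    intro x y hxy
    apply Subtype.ext
    have hval := congrArg Subtype.val hxy
    simp only [hSS] at hval
    obtain ⟨h1, h2⟩ := Prod.ext_iff.mp hval
    exact Prod.ext (sg_invol.injective h1) (sg_invol.injective h2)
  have key : ∀ e : ↑(En f n),
      ENNReal.ofReal ((hs (e:ℂ × ℂ).1 - hs (e:ℂ × ℂ).2)^2) ≤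
        (F (e:ℂ × ℂ) + F ((SS e : ℂ × ℂ))) / 2 := by
    intro e
    have hr : (hs (e:ℂ × ℂ).1 - hs (e:ℂ × ℂ).2)^2 ≤
        ((h (e:ℂ × ℂ).1 - h (e:ℂ × ℂ).2)^2 + (h (sg (e:ℂ × ℂ).1) - h (sg (e:ℂ × ℂ).2))^2)/2 := by
      simp only [hhs]
      nlinarith [sq_nonneg ((h (e:ℂ × ℂ).1 - h (e:ℂ × ℂ).2) + (h (sg (e:ℂ × ℂ).1) - h (sg (e:ℂ × ℂ).2))),
        sq_nonneg ((h (e:ℂ × ℂ).1 - h (e:ℂ × ℂ).2) - (h (sg (e:ℂ × ℂ).1) - h (sg (e:ℂ × ℂ).2)))]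
    calc ENNReal.ofReal ((hs (e:ℂ × ℂ).1 - hs (e:ℂ × ℂ).2)^2)
        ≤ ENNReal.ofReal (((h (e:ℂ × ℂ).1 - h (e:ℂ × ℂ).2)^2 +
            (h (sg (e:ℂ × ℂ).1) - h (sg (e:ℂ × ℂ).2))^2)/2) := ENNReal.ofReal_le_ofReal hr
      _ = ENNReal.ofReal ((h (e:ℂ × ℂ).1 - h (e:ℂ × ℂ).2)^2 +
            (h (sg (e:ℂ × ℂ).1) - h (sg (e:ℂ × ℂ).2))^2) / ENNReal.ofReal 2 :=
          ENNReal.ofReal_div_of_pos two_pos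
      _ = (F (e:ℂ × ℂ) + F ((SS e : ℂ × ℂ))) / 2 := by
          rw [ENNReal.ofReal_add (sq_nonneg _) (sq_nonneg _)]
          norm_num [hF, hSS]
  have hsum : ∑' e : ↑(En f n), ENNReal.ofReal ((hs (e:ℂ × ℂ).1 - hs (e:ℂ × ℂ).2)^2) ≤
      ∑' e : ↑(En f n), F (e:ℂ × ℂ) := by
    calc ∑' e : ↑(En f n), ENNReal.ofReal ((hs (e:ℂ × ℂ).1 - hs (e:ℂ × ℂ).2)^2)
        ≤ ∑' e : ↑(En f n), (F (e:ℂ × ℂ) + F ((SS e : ℂ × ℂ))) / 2 := ENNReal.tsum_le_tsum key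
      _ = (∑' e : ↑(En f n), F (e:ℂ × ℂ) + ∑' e : ↑(En f n), F ((SS e : ℂ × ℂ))) / 2 := by
          simp only [div_eq_mul_inv]
          rw [ENNReal.tsum_mul_right, ENNReal.tsum_add]
      _ ≤ (∑' e : ↑(En f n), F (e:ℂ × ℂ) + ∑' e : ↑(En f n), F (e:ℂ × ℂ)) / 2 := by
          exact ENNReal.div_le_div_right (add_le_add_right
            (ENNReal.tsum_comp_le_tsum_of_injective hinj (fun e => F (e : ℂ × ℂ))) _) 2
      _ = ∑' e : ↑(En f n), F (e:ℂ × ℂ) := by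
          rw [← two_mul, mul_comm, mul_div_assoc, ENNReal.div_self (by norm_num) (by norm_num),
            mul_one]
  exact mul_le_mul_right hsum _


/-- In the graphs `(G_n(f), E_n(f))` with simple weights, the
corner-to-corner effective resistance is monotone in `n`:
`R_{(G_n(f),E_n(f))}(p₁, p₅) ≤ R_{(G_{n+1}(f),E_{n+1}(f))}(p₁, p₅)` for every `n ≥ 0`
and every `f : ℕ → {0,1}`. -/
theorem stmt_12 (f : ℕ → ℕ) (hf : ∀ n, f n = 0 ∨ f n = 1) (n : ℕ) :
    edgeRes (En f n) {pt 1} {pt 5} ≤ edgeRes (En f (n + 1)) {pt 1} {pt 5} := by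
  rw [edgeRes, edgeRes, ENNReal.inv_le_inv]
  apply le_iInf
  intro h
  apply le_iInf
  rintro ⟨h1, h5⟩
  have hp1 : h (pt 1) = 1 := h1 (pt 1) rfl
  have hp5 : h (pt 5) = 0 := h5 (pt 5) rfl
  set hs : ℂ → ℝ := fun z => (h z + 1 - h (sg z)) / 2 with hhs
  have hsmid : ∀ z, tc z = 0 → hs z = 1/2 := by
    intro z hz
    simp only [hhs]
    rw [sg_fixed z hz]
    ring
  have hg1 : gOf hs (pt 1) = 1 := by
    rw [gOf, if_pos (by rw [tc_pt1]; norm_num)]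
    have : (3:ℂ) * pt 1 - 2 * pt 1 = pt 1 := by ring
    rw [this]
    simp only [hhs]
    rw [sg_pt1, hp1, hp5]
    norm_num
  have hg5 : gOf hs (pt 5) = 0 := by
    rw [gOf, if_neg (by rw [tc_pt5]; norm_num), if_pos (by rw [tc_pt5]; norm_num)]
    have : (3:ℂ) * pt 5 - 2 * pt 5 = pt 5 := by ring
    rw [this]
    simp only [hhs]
    rw [sg_pt5, hp1, hp5]
    norm_num
  calc ⨅ (g : ℂ → ℝ) (_ : (∀ a ∈ ({pt 1} : Set ℂ), g a = 1) ∧ (∀ b ∈ ({pt 5} : Set ℂ), g b = 0)),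
        edgeEnergy (En f (n+1)) g
      ≤ edgeEnergy (En f (n+1)) (gOf hs) := by
        refine iInf₂_le (gOf hs) ⟨?_, ?_⟩
        · rintro a rfl; exact hg1
        · rintro b rfl; exact hg5
    _ ≤ edgeEnergy (En f n) hs := energy_step f n hs hsmid
    _ ≤ edgeEnergy (En f n) h := sym_energy f n h
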